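/- Let (V,l,r) be a representation of a 3-pre-Lie algebra (A,{·,·,·}) over a field K of characteristic 0, and let V* be the dual space of V. For a bilinear map f : A×A → End(V), define f* : A×A → End(V*) by (f*(x,y)ξ)(v) = −ξ(f(x,y)v), and define the pair of bilinear maps l° , r° : A×A → End(V*) by l°(x,y) = l*(x,y) − r*(y,x) + r*(x,y) and r°(x,y) = −r*(x,y). Then (V*, l°, r°) is a representation of the 3-pre-Lie algebra (A,{·,·,·}), called the dual representation of (V,l,r). -/

import Mathlib

universe u v w

variable (K : Type u) [Field K] [CharZero K]

section MultilinearDefs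

variable {M₁ M₂ M₃ M₄ : Type*}
  [AddCommGroup M₁] [Module K M₁] [AddCommGroup M₂] [Module K M₂]
  [AddCommGroup M₃] [Module K M₃] [AddCommGroup M₄] [Module K M₄]

/-- A map `f : M₁ → M₂ → M₃ → M₄` which is `K`-linear in each of its three arguments. -/
def IsTrilinearMap (f : M₁ → M₂ → M₃ → M₄) : Prop :=
  (∀ (c : K) (x x' : M₁) (y : M₂) (z : M₃), f (c • x + x') y z = c • f x y z + f x' y z) ∧
  (∀ (c : K) (x : M₁) (y y' : M₂) (z : M₃), f x (c • y + y') z = c • f x y z + f x y' z) ∧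
  (∀ (c : K) (x : M₁) (y : M₂) (z z' : M₃), f x y (c • z + z') = c • f x y z + f x y z')

end MultilinearDefs

section Algebras

variable {A : Type*} [AddCommGroup A] [Module K A]
variable {V : Type*} [AddCommGroup V] [Module K V]

/-- The induced 3-commutator `[x,y,z]^C = {x,y,z} + {y,z,x} + {z,x,y}` of a ternary
operation. -/
def preC (p : A → A → A → A) : A → A → A → A :=
  fun x y z => p x y z + p y z x + p z x y

/-- A (trilinear) bracket makes `A` a 3-Lie algebra: it is skew-symmetric (alternating)
and satisfies the fundamental identity. -/
def Is3Lie (br : A → A → A → A) : Prop :=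
  IsTrilinearMap K br ∧
  (∀ x y z : A, br x y z = - br y x z) ∧
  (∀ x y z : A, br x y z = - br x z y) ∧
  (∀ x1 x2 x3 x4 x5 : A,
    br x1 x2 (br x3 x4 x5)
      = br (br x1 x2 x3) x4 x5 + br x3 (br x1 x2 x4) x5 + br x3 x4 (br x1 x2 x5))

/-- A (trilinear) operation makes `A` a 3-pre-Lie algebra: (P0), (P1), (P2). -/
def Is3PreLie (p : A → A → A → A) : Prop :=
  IsTrilinearMap K p ∧
  (∀ x y z : A, p x y z = - p y x z) ∧
  (∀ x1 x2 x3 x4 x5 : A,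
    p x1 x2 (p x3 x4 x5)
      = p (preC p x1 x2 x3) x4 x5 + p x3 (preC p x1 x2 x4) x5 + p x3 x4 (p x1 x2 x5)) ∧
  (∀ x1 x2 x3 x4 x5 : A,
    p (preC p x1 x2 x3) x4 x5
      = p x1 x2 (p x3 x4 x5) + p x2 x3 (p x1 x4 x5) + p x3 x1 (p x2 x4 x5))

/-- `ρ` is a representation of the 3-Lie algebra `(A, br)` on `V`. -/
def Is3LieRep (br : A → A → A → A) (ρ : A → A → V → V) : Prop :=
  IsTrilinearMap K ρ ∧
  (∀ (x y : A) (v : V), ρ x y v = - ρ y x v) ∧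
  (∀ (x1 x2 x3 x4 : A) (v : V),
    ρ x1 x2 (ρ x3 x4 v) - ρ x3 x4 (ρ x1 x2 v)
      = ρ (br x1 x2 x3) x4 v - ρ (br x1 x2 x4) x3 v) ∧
  (∀ (x1 x2 x3 x4 : A) (v : V),
    ρ (br x1 x2 x3) x4 v
      = ρ x1 x2 (ρ x3 x4 v) + ρ x2 x3 (ρ x1 x4 v) + ρ x3 x1 (ρ x2 x4 v))

/-- `(l, r)` is a representation of the 3-pre-Lie algebra `(A, p)` on `V`:
`l` is skew-symmetric and a representation of the sub-adjacent 3-Lie algebra,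
together with conditions (rep1)-(rep4), where `μ(x,y) = l(x,y) + r(x,y) - r(y,x)`. -/
def Is3PreLieRep (p : A → A → A → A) (l r : A → A → V → V) : Prop :=
  IsTrilinearMap K l ∧ IsTrilinearMap K r ∧
  Is3LieRep K (preC p) l ∧
  (∀ (x1 x2 x3 x4 : A) (v : V),
    l x1 x2 (r x3 x4 v)
      = r x3 x4 (l x1 x2 v + r x1 x2 v - r x2 x1 v)
        + r (preC p x1 x2 x3) x4 v + r x3 (p x1 x2 x4) v) ∧
  (∀ (x1 x2 x3 x4 : A) (v : V),
    r (preC p x1 x2 x3) x4 v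
      = l x1 x2 (r x3 x4 v) + l x2 x3 (r x1 x4 v) + l x3 x1 (r x2 x4 v)) ∧
  (∀ (x1 x2 x3 x4 : A) (v : V),
    r x1 (p x2 x3 x4) v
      = r x3 x4 (l x1 x2 v + r x1 x2 v - r x2 x1 v)
        - r x2 x4 (l x1 x3 v + r x1 x3 v - r x3 x1 v) + l x2 x3 (r x1 x4 v)) ∧
  (∀ (x1 x2 x3 x4 : A) (v : V),
    r x3 x4 (l x1 x2 v + r x1 x2 v - r x2 x1 v)
      = l x1 x2 (r x3 x4 v) - r x2 (p x1 x3 x4) v + r x1 (p x2 x3 x4) v)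

/-- `T : V → A` is an `𝒪`-operator on the 3-Lie algebra `(A, br)` associated to the
representation `ρ` of `A` on `V`. -/
def IsOOperator3Lie (br : A → A → A → A) (ρ : A → A → V → V) (T : V →ₗ[K] A) : Prop :=
  ∀ u v w : V,
    br (T u) (T v) (T w) = T (ρ (T u) (T v) w + ρ (T v) (T w) u + ρ (T w) (T u) v)

/-- `T : V → A` is an `𝒪`-operator on the 3-pre-Lie algebra `(A, p)` associated to the
representation `(l, r)` of `A` on `V`. -/
def IsOOperator3PreLie (p : A → A → A → A) (l r : A → A → V → V) (T : V →ₗ[K] A) : Prop :=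
  ∀ u v w : V,
    p (T u) (T v) (T w) = T (l (T u) (T v) w - r (T u) (T w) v + r (T v) (T w) u)

/-- `R : A → A` is a Rota-Baxter operator of weight 0 on the ternary algebra `(A, br)`. -/
def IsRotaBaxter3 (br : A → A → A → A) (R : A →ₗ[K] A) : Prop :=
  ∀ x y z : A,
    br (R x) (R y) (R z) = R (br (R x) (R y) z + br (R x) y (R z) + br x (R y) (R z))

/-- The horizontal operation `{x,y,z}^h = ↖(x,y,z) + ↗(x,y,z) - ↗(y,x,z)`. -/
def hOp (nw ne : A → A → A → A) : A → A → A → A :=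
  fun x y z => nw x y z + ne x y z - ne y x z

/-- The vertical operation `{x,y,z}^v = ↖(x,y,z) + ↗(z,x,y) - ↗(z,y,x)`. -/
def vOp (nw ne : A → A → A → A) : A → A → A → A :=
  fun x y z => nw x y z + ne z x y - ne z y x

/-- The bracket `[x,y,z]^C = {x,y,z}^h + {y,z,x}^h + {z,x,y}^h`. -/
def cOp (nw ne : A → A → A → A) : A → A → A → A :=
  fun x y z => hOp nw ne x y z + hOp nw ne y z x + hOp nw ne z x y

/-- `(A, nw, ne)` (with `nw = ↖`, `ne = ↗`) is a 3-L-dendriform algebra: axioms (L0)-(L6). -/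
def Is3LDendriform (nw ne : A → A → A → A) : Prop :=
  IsTrilinearMap K nw ∧ IsTrilinearMap K ne ∧
  (∀ x1 x2 x3 : A, nw x1 x2 x3 + nw x2 x1 x3 = 0) ∧
  (∀ x1 x2 x3 x4 x5 : A,
    nw x1 x2 (nw x3 x4 x5) - nw x3 x4 (nw x1 x2 x5)
      = nw (cOp nw ne x1 x2 x3) x4 x5 - nw (cOp nw ne x1 x2 x4) x3 x5) ∧
  (∀ x1 x2 x3 x4 x5 : A,
    nw x1 x2 (ne x5 x3 x4) - ne x5 x3 (hOp nw ne x1 x2 x4)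
      = ne x5 (cOp nw ne x1 x2 x3) x4 + ne (vOp nw ne x1 x2 x5) x3 x4) ∧
  (∀ x1 x2 x3 x4 x5 : A,
    ne x5 x1 (hOp nw ne x2 x3 x4) - nw x2 x3 (ne x5 x1 x4)
      = ne (vOp nw ne x1 x2 x5) x3 x4 - ne (vOp nw ne x1 x3 x5) x2 x4) ∧
  (∀ x1 x2 x3 x4 x5 : A,
    nw (cOp nw ne x1 x2 x3) x4 x5
      = nw x1 x2 (nw x3 x4 x5) + nw x2 x3 (nw x1 x4 x5) + nw x3 x1 (nw x2 x4 x5)) ∧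
  (∀ x1 x2 x3 x4 x5 : A,
    ne x5 (cOp nw ne x1 x2 x3) x4
      = nw x1 x2 (ne x5 x3 x4) + nw x2 x3 (ne x5 x1 x4) + nw x3 x1 (ne x5 x2 x4)) ∧
  (∀ x1 x2 x3 x4 x5 : A,
    nw x1 x2 (ne x5 x3 x4) + ne x5 x1 (hOp nw ne x2 x3 x4)
      = ne x5 x2 (hOp nw ne x1 x3 x4) + ne (vOp nw ne x1 x2 x5) x3 x4)

end Algebras


section AuxHelpers

variable {K : Type*} [Field K]
variable {M₁ M₂ M₃ M₄ : Type*}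
  [AddCommGroup M₁] [Module K M₁] [AddCommGroup M₂] [Module K M₂]
  [AddCommGroup M₃] [Module K M₃] [AddCommGroup M₄] [Module K M₄]
  {f : M₁ → M₂ → M₃ → M₄}

lemma t3add (h : IsTrilinearMap K f) (x : M₁) (y : M₂) (z z' : M₃) :
    f x y (z + z') = f x y z + f x y z' := by simpa using h.2.2 1 x y z z'

lemma t3zero (h : IsTrilinearMap K f) (x : M₁) (y : M₂) : f x y (0 : M₃) = 0 := by
  have h0 := t3add h x y 0 0
  rw [add_zero] at h0
  exact left_eq_add.mp h0

lemma t3smul (h : IsTrilinearMap K f) (c : K) (x : M₁) (y : M₂) (z : M₃) :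
    f x y (c • z) = c • f x y z := by
  have := h.2.2 c x y z 0
  simpa [t3zero h] using this

lemma t3neg (h : IsTrilinearMap K f) (x : M₁) (y : M₂) (z : M₃) :
    f x y (-z) = - f x y z := by
  have := t3smul h (-1) x y z
  simpa using this

lemma t3sub (h : IsTrilinearMap K f) (x : M₁) (y : M₂) (z z' : M₃) :
    f x y (z - z') = f x y z - f x y z' := by
  rw [sub_eq_add_neg, t3add h, t3neg h, ← sub_eq_add_neg]

lemma t1add (h : IsTrilinearMap K f) (x x' : M₁) (y : M₂) (z : M₃) :
    f (x + x') y z = f x y z + f x' y z := by simpa using h.1 1 x x' y z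

lemma t1zero (h : IsTrilinearMap K f) (y : M₂) (z : M₃) : f (0 : M₁) y z = 0 := by
  have h0 := t1add h 0 0 y z
  rw [add_zero] at h0
  exact left_eq_add.mp h0

lemma t1smul (h : IsTrilinearMap K f) (c : K) (x : M₁) (y : M₂) (z : M₃) :
    f (c • x) y z = c • f x y z := by
  have := h.1 c x 0 y z
  simpa [t1zero h] using this

lemma t1neg (h : IsTrilinearMap K f) (x : M₁) (y : M₂) (z : M₃) :
    f (-x) y z = - f x y z := by
  have := t1smul h (-1) x y z
  simpa using this

lemma t2add (h : IsTrilinearMap K f) (x : M₁) (y y' : M₂) (z : M₃) :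
    f x (y + y') z = f x y z + f x y' z := by simpa using h.2.1 1 x y y' z

lemma t2zero (h : IsTrilinearMap K f) (x : M₁) (z : M₃) : f x (0 : M₂) z = 0 := by
  have h0 := t2add h x 0 0 z
  rw [add_zero] at h0
  exact left_eq_add.mp h0

lemma t2smul (h : IsTrilinearMap K f) (c : K) (x : M₁) (y : M₂) (z : M₃) :
    f x (c • y) z = c • f x y z := by
  have := h.2.1 c x y 0 z
  simpa [t2zero h] using this

lemma t2neg (h : IsTrilinearMap K f) (x : M₁) (y : M₂) (z : M₃) :
    f x (-y) z = - f x y z := by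
  have := t2smul h (-1) x y z
  simpa using this

end AuxHelpers

section DualDefs

variable {K : Type*} [Field K]
variable {A : Type*} [AddCommGroup A] [Module K A]
variable {V : Type*} [AddCommGroup V] [Module K V]

/-- The dual `l°`-operator. -/
def dLo (l r : A → A → V → V) (hl : IsTrilinearMap K l) (hr : IsTrilinearMap K r)
    (x y : A) (ξ : Module.Dual K V) : Module.Dual K V where
  toFun v := -ξ (l x y v) + ξ (r y x v) - ξ (r x y v)
  map_add' u w := by
    rw [t3add hl, t3add hr y x, t3add hr x y, map_add, map_add, map_add]; ring
  map_smul' c u := by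
    simp only [t3smul hl, t3smul hr, map_smul, smul_eq_mul, RingHom.id_apply]; ring

@[simp] lemma dLo_apply (l r : A → A → V → V) (hl : IsTrilinearMap K l)
    (hr : IsTrilinearMap K r) (x y : A) (ξ : Module.Dual K V) (v : V) :
    dLo l r hl hr x y ξ v = -ξ (l x y v) + ξ (r y x v) - ξ (r x y v) := rfl

/-- The dual `r°`-operator. -/
def dRo (r : A → A → V → V) (hr : IsTrilinearMap K r)
    (x y : A) (ξ : Module.Dual K V) : Module.Dual K V where
  toFun v := ξ (r x y v)
  map_add' u w := by rw [t3add hr, map_add]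
  map_smul' c u := by simp [t3smul hr]

@[simp] lemma dRo_apply (r : A → A → V → V) (hr : IsTrilinearMap K r)
    (x y : A) (ξ : Module.Dual K V) (v : V) :
    dRo r hr x y ξ v = ξ (r x y v) := rfl

end DualDefs

/-- The dual representation: given a representation `(V, l, r)` of a 3-pre-Lie
algebra, the maps `l° = l* - r*∘τ + r*` and `r° = -r*` (with `(f*(x,y)ξ)(v) = -ξ(f(x,y)v)`)
form a representation of `(A, {·,·,·})` on the dual space `V*`. -/
theorem stmt8 {A : Type v} [AddCommGroup A] [Module K A]
    {V : Type w} [AddCommGroup V] [Module K V]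
    (p : A → A → A → A) (hp : Is3PreLie K p)
    (l r : A → A → V → V) (hrep : Is3PreLieRep K p l r) :
    ∃ lo ro : A → A → Module.Dual K V → Module.Dual K V,
      (∀ (x y : A) (ξ : Module.Dual K V) (v : V),
        lo x y ξ v = - ξ (l x y v) + ξ (r y x v) - ξ (r x y v)) ∧
      (∀ (x y : A) (ξ : Module.Dual K V) (v : V),
        ro x y ξ v = ξ (r x y v)) ∧
      Is3PreLieRep K p lo ro := by
  obtain ⟨hpt, hp0, hp1, hp2⟩ := hp
  obtain ⟨hlt, hrt, hlieRep, H1, H2, H3, H4⟩ := hrep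
  obtain ⟨hlt2, hlsk, hLiV, hLiiV⟩ := hlieRep
  -- bracket symmetry lemmas
  have br_sw : ∀ a b c : A, preC p a b c = - preC p b a c := by
    intro a b c
    show p a b c + p b c a + p c a b = -(p b a c + p a c b + p c b a)
    rw [hp0 b a c, hp0 a c b, hp0 c b a]; abel
  have br_sw23 : ∀ a b c : A, preC p a b c = - preC p a c b := by
    intro a b c
    show p a b c + p b c a + p c a b = -(p a c b + p c b a + p b a c)
    rw [hp0 a c b, hp0 c b a, hp0 b a c]; abel
  have br_cyc : ∀ a b c : A, preC p a b c = preC p b c a := by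
    intro a b c
    show p a b c + p b c a + p c a b = p b c a + p c a b + p a b c
    abel
  -- scalar-level facts
  have Fskew : ∀ (ξ : Module.Dual K V) (a b : A) (w : V),
      ξ (l a b w) + ξ (l b a w) = 0 := by
    intro ξ a b w; rw [hlsk a b w, map_neg]; ring
  have Fbr1swr : ∀ (ξ : Module.Dual K V) (a b c d : A) (v : V),
      ξ (r (preC p b a c) d v) + ξ (r (preC p a b c) d v) = 0 := by
    intro ξ a b c d v; rw [br_sw b a c, t1neg hrt, map_neg]; ring
  have Fbr1sw23l : ∀ (ξ : Module.Dual K V) (a b c d : A) (v : V),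
      ξ (l (preC p a c b) d v) + ξ (l (preC p a b c) d v) = 0 := by
    intro ξ a b c d v; rw [br_sw23 a c b, t1neg hlt, map_neg]; ring
  have Fbr1sw23r : ∀ (ξ : Module.Dual K V) (a b c d : A) (v : V),
      ξ (r (preC p a c b) d v) + ξ (r (preC p a b c) d v) = 0 := by
    intro ξ a b c d v; rw [br_sw23 a c b, t1neg hrt, map_neg]; ring
  have Fbr1cycl : ∀ (ξ : Module.Dual K V) (a b c d : A) (v : V),
      ξ (l (preC p b c a) d v) - ξ (l (preC p a b c) d v) = 0 := by
    intro ξ a b c d v; rw [← br_cyc a b c]; ring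
  have Fbr2sw23 : ∀ (ξ : Module.Dual K V) (a b c d : A) (v : V),
      ξ (r d (preC p a c b) v) + ξ (r d (preC p a b c) v) = 0 := by
    intro ξ a b c d v; rw [br_sw23 a c b, t2neg hrt, map_neg]; ring
  have Fbr2split : ∀ (ξ : Module.Dual K V) (a b c d : A) (v : V),
      ξ (r d (preC p a b c) v)
        = ξ (r d (p a b c) v) + ξ (r d (p b c a) v) + ξ (r d (p c a b) v) := by
    intro ξ a b c d v
    rw [show preC p a b c = p a b c + p b c a + p c a b from rfl,
      t2add hrt, t2add hrt, map_add, map_add]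
  have Fpsw : ∀ (ξ : Module.Dual K V) (a b c d : A) (v : V),
      ξ (r a (p c b d) v) + ξ (r a (p b c d) v) = 0 := by
    intro ξ a b c d v; rw [hp0 c b d, t2neg hrt, map_neg]; ring
  have F1 : ∀ (ξ : Module.Dual K V) (a b c d : A) (v : V),
      ξ (l a b (r c d v))
        = ξ (r c d (l a b v)) + ξ (r c d (r a b v)) - ξ (r c d (r b a v))
          + ξ (r (preC p a b c) d v) + ξ (r c (p a b d) v) := by
    intro ξ a b c d v
    have h := H1 a b c d v
    simp only [t3sub hrt, t3add hrt] at h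
    have h2 := congrArg ξ h
    simp only [map_add, map_sub] at h2
    linear_combination h2
  have F2 : ∀ (ξ : Module.Dual K V) (a b c d : A) (v : V),
      ξ (r (preC p a b c) d v)
        = ξ (l a b (r c d v)) + ξ (l b c (r a d v)) + ξ (l c a (r b d v)) := by
    intro ξ a b c d v
    have h2 := congrArg ξ (H2 a b c d v)
    simp only [map_add] at h2
    linear_combination h2
  have F3 : ∀ (ξ : Module.Dual K V) (a b c d : A) (v : V),
      ξ (r a (p b c d) v)
        = ξ (r c d (l a b v)) + ξ (r c d (r a b v)) - ξ (r c d (r b a v))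
          - ξ (r b d (l a c v)) - ξ (r b d (r a c v)) + ξ (r b d (r c a v))
          + ξ (l b c (r a d v)) := by
    intro ξ a b c d v
    have h := H3 a b c d v
    simp only [t3sub hrt, t3add hrt] at h
    have h2 := congrArg ξ h
    simp only [map_add, map_sub] at h2
    linear_combination h2
  have F4 : ∀ (ξ : Module.Dual K V) (a b c d : A) (v : V),
      ξ (r c d (l a b v)) + ξ (r c d (r a b v)) - ξ (r c d (r b a v))
        = ξ (l a b (r c d v)) - ξ (r b (p a c d) v) + ξ (r a (p b c d) v) := by
    intro ξ a b c d v
    have h := H4 a b c d v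
    simp only [t3sub hrt, t3add hrt] at h
    have h2 := congrArg ξ h
    simp only [map_add, map_sub] at h2
    linear_combination h2
  have FLi : ∀ (ξ : Module.Dual K V) (a b c d : A) (v : V),
      ξ (l a b (l c d v)) - ξ (l c d (l a b v))
        = ξ (l (preC p a b c) d v) - ξ (l (preC p a b d) c v) := by
    intro ξ a b c d v
    have h2 := congrArg ξ (hLiV a b c d v)
    simp only [map_add, map_sub] at h2
    linear_combination h2
  have FLii : ∀ (ξ : Module.Dual K V) (a b c d : A) (v : V),
      ξ (l (preC p a b c) d v)
        = ξ (l a b (l c d v)) + ξ (l b c (l a d v)) + ξ (l c a (l b d v)) := by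
    intro ξ a b c d v
    have h2 := congrArg ξ (hLiiV a b c d v)
    simp only [map_add, map_sub] at h2
    linear_combination h2
  -- the dual maps
  have triLo : IsTrilinearMap K (dLo l r hlt hrt) := by
    refine ⟨fun c x x' y ξ => LinearMap.ext fun v => ?_,
      fun c x y y' ξ => LinearMap.ext fun v => ?_,
      fun c x y ξ ξ' => LinearMap.ext fun v => ?_⟩
    · simp only [dLo_apply, LinearMap.add_apply, LinearMap.smul_apply, smul_eq_mul]
      rw [hlt.1 c x x' y v, hrt.2.1 c y x x' v, hrt.1 c x x' y v]
      simp only [map_add, map_smul, smul_eq_mul]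
      ring
    · simp only [dLo_apply, LinearMap.add_apply, LinearMap.smul_apply, smul_eq_mul]
      rw [hlt.2.1 c x y y' v, hrt.1 c y y' x v, hrt.2.1 c x y y' v]
      simp only [map_add, map_smul, smul_eq_mul]
      ring
    · simp only [dLo_apply, LinearMap.add_apply, LinearMap.smul_apply, smul_eq_mul]
      ring
  have triRo : IsTrilinearMap K (dRo r hrt) := by
    refine ⟨fun c x x' y ξ => LinearMap.ext fun v => ?_,
      fun c x y y' ξ => LinearMap.ext fun v => ?_,
      fun c x y ξ ξ' => LinearMap.ext fun v => ?_⟩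
    · simp only [dRo_apply, LinearMap.add_apply, LinearMap.smul_apply, smul_eq_mul]
      rw [hrt.1 c x x' y v]
      simp only [map_add, map_smul, smul_eq_mul]
    · simp only [dRo_apply, LinearMap.add_apply, LinearMap.smul_apply, smul_eq_mul]
      rw [hrt.2.1 c x y y' v]
      simp only [map_add, map_smul, smul_eq_mul]
    · simp only [dRo_apply, LinearMap.add_apply, LinearMap.smul_apply, smul_eq_mul]
  refine ⟨dLo l r hlt hrt, dRo r hrt, fun x y ξ v => rfl, fun x y ξ v => rfl,
    triLo, triRo, ⟨triLo, ?_, ?_, ?_⟩, ?_, ?_, ?_, ?_⟩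
  · -- skew-symmetry of lo
    intro x y ξ
    apply LinearMap.ext; intro v
    simp only [dLo_apply, LinearMap.neg_apply]
    linear_combination (-1 : K) * Fskew ξ x y v
  · -- 3-Lie representation condition (i)
    intro x1 x2 x3 x4 ξ
    apply LinearMap.ext; intro v
    simp only [dLo_apply, LinearMap.sub_apply]
    linear_combination (-1 : K) * (F1 ξ x1 x2 x3 x4 v)
      + (-1 : K) * (FLi ξ x1 x2 x3 x4 v)
      + (-1 : K) * (Fbr2sw23 ξ x1 x2 x3 x4 v)
      + (-1 : K) * (F4 ξ x1 x2 x4 x3 v)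
      + (-1 : K) * (Fbr1swr ξ x1 x2 x4 x3 v)
      + Fbr2split ξ x1 x2 x4 x3 v
      + Fbr2split ξ x1 x3 x2 x4 v
      + (-1 : K) * (F1 ξ x1 x3 x4 x2 v)
      + (-1 : K) * (F3 ξ x1 x3 x4 x2 v)
      + (-1 : K) * (F4 ξ x1 x3 x4 x2 v)
      + (-1 : K) * (Fbr1sw23r ξ x1 x3 x4 x2 v)
      + (-1 : K) * (Fbr2sw23 ξ x1 x3 x4 x2 v)
      + Fpsw ξ x1 x3 x4 x2 v
      + Fbr2split ξ x1 x3 x4 x2 v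
      + F2 ξ x1 x4 x3 x2 v
      + (-1 : K) * (F3 ξ x1 x4 x3 x2 v)
      + Fbr2split ξ x1 x4 x3 x2 v
      + Fpsw ξ x2 x1 x3 x4 v
      + (-1 : K) * (F1 ξ x2 x1 x4 x3 v)
      + (-1 : K) * (F4 ξ x2 x1 x4 x3 v)
      + Fpsw ξ x2 x1 x4 x3 v
      + F3 ξ x2 x3 x4 x1 v
      + (-1 : K) * (Fbr1swr ξ x2 x3 x4 x1 v)
      + Fbr1sw23r ξ x2 x3 x4 x1 v
      + (-1 : K) * (F2 ξ x2 x4 x3 x1 v)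
      + F3 ξ x2 x4 x3 x1 v
      + (-1 : K) * (F3 ξ x3 x1 x4 x2 v)
      + (-1 : K) * (F4 ξ x3 x1 x4 x2 v)
      + Fpsw ξ x3 x1 x4 x2 v
      + (-1 : K) * (F1 ξ x3 x2 x4 x1 v)
      + F3 ξ x3 x2 x4 x1 v
  · -- 3-Lie representation condition (ii)
    intro x1 x2 x3 x4 ξ
    apply LinearMap.ext; intro v
    simp only [dLo_apply, LinearMap.add_apply]
    linear_combination F2 ξ x1 x2 x3 x4 v
      + (-1 : K) * (F3 ξ x1 x2 x3 x4 v)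
      + (-1 : K) * (F4 ξ x1 x2 x3 x4 v)
      + FLi ξ x1 x2 x3 x4 v
      + FLii ξ x1 x2 x3 x4 v
      + Fbr1cycl ξ x1 x2 x3 x4 v
      + (-2 : K) * (Fbr1sw23r ξ x1 x2 x3 x4 v)
      + Fpsw ξ x1 x2 x3 x4 v
      + Fbr2split ξ x1 x2 x3 x4 v
      + (-1 : K) * (F1 ξ x1 x2 x4 x3 v)
      + (-1 : K) * (F3 ξ x1 x2 x4 x3 v)
      + (-1 : K) * (F4 ξ x1 x2 x4 x3 v)
      + Fbr1cycl ξ x1 x2 x4 x3 v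
      + (-1 : K) * (Fbr1sw23r ξ x1 x2 x4 x3 v)
      + F2 ξ x1 x3 x2 x4 v
      + (-1 : K) * (F3 ξ x1 x3 x2 x4 v)
      + Fbr1swr ξ x1 x3 x2 x4 v
      + F3 ξ x1 x3 x4 x2 v
      + (-1 : K) * (Fbr1swr ξ x1 x3 x4 x2 v)
      + Fbr1sw23r ξ x1 x3 x4 x2 v
      + (-1 : K) * (Fpsw ξ x1 x3 x4 x2 v)
      + (-1 : K) * (F1 ξ x1 x4 x2 x3 v)
      + (-1 : K) * (F2 ξ x1 x4 x3 x2 v)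
      + F3 ξ x1 x4 x3 x2 v
      + (-1 : K) * (F3 ξ x2 x1 x3 x4 v)
      + (-1 : K) * (F4 ξ x2 x1 x3 x4 v)
      + Fpsw ξ x2 x1 x3 x4 v
      + FLi ξ x2 x3 x1 x4 v
      + (-1 : K) * (F1 ξ x2 x3 x4 x1 v)
      + (-1 : K) * (F3 ξ x2 x3 x4 x1 v)
      + (-1 : K) * (F4 ξ x2 x3 x4 x1 v)
      + (-1 : K) * (Fbr1sw23l ξ x2 x3 x4 x1 v)
      + (-1 : K) * (Fbr1sw23r ξ x2 x3 x4 x1 v)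
      + (-1 : K) * (F1 ξ x2 x4 x3 x1 v)
      + (-1 : K) * (FLi ξ x2 x4 x3 x1 v)
      + F1 ξ x3 x1 x2 x4 v
      + (-1 : K) * (F1 ξ x3 x1 x4 x2 v)
  · -- rep condition 1
    intro x1 x2 x3 x4 ξ
    apply LinearMap.ext; intro v
    simp only [dLo_apply, dRo_apply, LinearMap.add_apply, LinearMap.sub_apply]
    linear_combination F1 ξ x1 x2 x3 x4 v
  · -- rep condition 2
    intro x1 x2 x3 x4 ξ
    apply LinearMap.ext; intro v
    simp only [dLo_apply, dRo_apply, LinearMap.add_apply]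
    linear_combination (-1 : K) * (F2 ξ x1 x2 x3 x4 v)
      + F3 ξ x1 x2 x3 x4 v
      + F4 ξ x1 x2 x3 x4 v
      + (2 : K) * (Fbr1sw23r ξ x1 x2 x3 x4 v)
      + (-1 : K) * (Fpsw ξ x1 x2 x3 x4 v)
      + (-1 : K) * (F2 ξ x1 x3 x2 x4 v)
      + F3 ξ x1 x3 x2 x4 v
      + (-1 : K) * (Fbr1swr ξ x1 x3 x2 x4 v)
      + F3 ξ x2 x1 x3 x4 v
      + F4 ξ x2 x1 x3 x4 v
      + (-1 : K) * (Fpsw ξ x2 x1 x3 x4 v)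
      + (-1 : K) * (F1 ξ x3 x1 x2 x4 v)
  · -- rep condition 3
    intro x1 x2 x3 x4 ξ
    apply LinearMap.ext; intro v
    simp only [dLo_apply, dRo_apply, LinearMap.add_apply, LinearMap.sub_apply]
    linear_combination (-1 : K) * (F4 ξ x1 x2 x3 x4 v)
      + (-1 : K) * (Fpsw ξ x1 x2 x3 x4 v)
      + (-1 : K) * (F1 ξ x1 x3 x2 x4 v)
      + (-1 : K) * (F2 ξ x1 x3 x2 x4 v)
      + F3 ξ x1 x3 x2 x4 v
      + F3 ξ x2 x1 x3 x4 v
      + F4 ξ x2 x1 x3 x4 v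
  · -- rep condition 4
    intro x1 x2 x3 x4 ξ
    apply LinearMap.ext; intro v
    simp only [dLo_apply, dRo_apply, LinearMap.add_apply, LinearMap.sub_apply]
    linear_combination F4 ξ x1 x2 x3 x4 v
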